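/- Assume (LOP) and König's condition (K). Then there is no arbitrage with respect to the ‖·‖-null sets in the class of generalized portfolios: if (V_m,n_m,H_m)_{m≥0} is a generalized portfolio with Σ_m V_m = 0 whose total terminal wealth V_∞ is ≥ 0 outside a ‖·‖-null set, then {S : V_∞(S) > 0} is a ‖·‖-null set. -/

import Mathlib

open Filter
open scoped ENNReal

noncomputable section

/-- A simple portfolio: an initial endowment `V`, a maturity `n`, and
nonanticipating position functions `H i`. -/
structure SimplePortfolio where
  V : ℝ
  n : ℕ
  H : ℕ → (ℕ → ℝ) → ℝ
  nonanticipating : ∀ i, ∀ S S' : ℕ → ℝ, (∀ k, k ≤ i → S k = S' k) → H i S = H i S'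

namespace SimplePortfolio

/-- Wealth process at time `j`. -/
def wealthAt (P : SimplePortfolio) (j : ℕ) (S : ℕ → ℝ) : ℝ :=
  P.V + ∑ i ∈ Finset.range (min j P.n), P.H i S * (S (i + 1) - S i)

/-- Terminal wealth `Π_∞`. -/
def wealth (P : SimplePortfolio) (S : ℕ → ℝ) : ℝ :=
  P.V + ∑ i ∈ Finset.range P.n, P.H i S * (S (i + 1) - S i)

/-- A positive simple portfolio relative to the trajectory set `𝒮`. -/
def Positive (𝒮 : Set (ℕ → ℝ)) (P : SimplePortfolio) : Prop :=
  0 ≤ P.V ∧ ∀ S ∈ 𝒮, 0 ≤ P.wealth S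

end SimplePortfolio

/-- A generalized portfolio: a sequence of simple portfolios, positive for `m ≥ 1`. -/
def IsGenPortfolio (𝒮 : Set (ℕ → ℝ)) (P : ℕ → SimplePortfolio) : Prop :=
  ∀ m, 1 ≤ m → (P m).Positive 𝒮

/-- Total terminal wealth of a generalized portfolio, valued in `(-∞, +∞]`. -/
def totalWealth (P : ℕ → SimplePortfolio) (S : ℕ → ℝ) : EReal :=
  ((P 0).wealth S : EReal) + ((∑' m, ENNReal.ofReal ((P (m + 1)).wealth S) : ℝ≥0∞) : EReal)

/-- Total initial endowment of a generalized portfolio, valued in `(-∞, +∞]`. -/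
def totalEndow (P : ℕ → SimplePortfolio) : EReal :=
  ((P 0).V : EReal) + ((∑' m, ENNReal.ofReal ((P (m + 1)).V) : ℝ≥0∞) : EReal)

/-- The superhedging operator `σ̄` using generalized portfolios. -/
def sigmaBar (𝒮 : Set (ℕ → ℝ)) (f : (ℕ → ℝ) → EReal) : EReal :=
  sInf {c : EReal | ∃ P : ℕ → SimplePortfolio, IsGenPortfolio 𝒮 P ∧
    (∀ S ∈ 𝒮, f S ≤ totalWealth P S) ∧ c = totalEndow P}

/-- The superhedging operator `Ī` using positive generalized portfolios. -/
def IBar (𝒮 : Set (ℕ → ℝ)) (f : (ℕ → ℝ) → EReal) : EReal :=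
  sInf {c : EReal | ∃ P : ℕ → SimplePortfolio, (∀ m, (P m).Positive 𝒮) ∧
    (∀ S ∈ 𝒮, f S ≤ ((∑' m, ENNReal.ofReal ((P m).wealth S) : ℝ≥0∞) : EReal)) ∧
    c = ((∑' m, ENNReal.ofReal ((P m).V) : ℝ≥0∞) : EReal)}

/-- The trajectory-wise Law of One Price (LOP). -/
def LOP (𝒮 : Set (ℕ → ℝ)) : Prop :=
  ∀ P Q : SimplePortfolio, (∀ S ∈ 𝒮, P.wealth S = Q.wealth S) → P.V = Q.V

/-- Positivity of the elementary hedging functional `I`: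
any simple portfolio whose terminal wealth is nonnegative on `𝒮` (i.e. an element of `E⁺`)
has nonnegative initial endowment (price). -/
def IPos (𝒮 : Set (ℕ → ℝ)) : Prop :=
  ∀ P : SimplePortfolio, (∀ S ∈ 𝒮, 0 ≤ P.wealth S) → 0 ≤ P.V

/-- Leinert's condition (L): `σ̄(0) ≥ 0`. -/
def LeinertCond (𝒮 : Set (ℕ → ℝ)) : Prop := 0 ≤ sigmaBar 𝒮 (fun _ => 0)

/-- König's condition (K): `I(f) + Ī(f⁻) ≤ Ī(f⁺)` for all `f ∈ E`. -/
def KoenigCond (𝒮 : Set (ℕ → ℝ)) : Prop :=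
  ∀ P : SimplePortfolio,
    (P.V : EReal) + IBar 𝒮 (fun S => ((max (-(P.wealth S)) 0 : ℝ) : EReal))
      ≤ IBar 𝒮 (fun S => ((max (P.wealth S) 0 : ℝ) : EReal))

/-- The seminorm `‖f‖ = Ī(|f|)`. -/
def pnorm (𝒮 : Set (ℕ → ℝ)) (f : (ℕ → ℝ) → ℝ) : EReal :=
  IBar 𝒮 (fun S => ((|f S| : ℝ) : EReal))

/-- Null sets with respect to the seminorm `‖·‖`. -/
def NullSet (𝒮 : Set (ℕ → ℝ)) (A : Set (ℕ → ℝ)) : Prop :=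
  IBar 𝒮 (A.indicator fun _ => (1 : EReal)) = 0

/-- The shifted conditional space `𝒮^{(S,j)}`. -/
def shiftedSpace (𝒮 : Set (ℕ → ℝ)) (S : ℕ → ℝ) (j : ℕ) : Set (ℕ → ℝ) :=
  {T | ∃ S' ∈ 𝒮, (∀ i, i ≤ j → S' i = S i) ∧ ∀ i, T i = S' (j + i)}

/-- Leinert's condition at every node (nL). -/
def NodewiseL (𝒮 : Set (ℕ → ℝ)) : Prop :=
  ∀ S ∈ 𝒮, ∀ j : ℕ, LeinertCond (shiftedSpace 𝒮 S j)

/-- König's condition (together with (LOP)) at every node (nK). -/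
def NodewiseK (𝒮 : Set (ℕ → ℝ)) : Prop :=
  ∀ S ∈ 𝒮, ∀ j : ℕ, LOP (shiftedSpace 𝒮 S j) ∧ KoenigCond (shiftedSpace 𝒮 S j)

/-- `S'` agrees with `S` up to time `j`. -/
def agreesUpTo (S S' : ℕ → ℝ) (j : ℕ) : Prop := ∀ i, i ≤ j → S' i = S i

/-- The node `𝒮_{(S,j)}` is flat. -/
def FlatNode (𝒮 : Set (ℕ → ℝ)) (S : ℕ → ℝ) (j : ℕ) : Prop :=
  ∀ S' ∈ 𝒮, agreesUpTo S S' j → S' (j + 1) = S j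

/-- The node `𝒮_{(S,j)}` is an arbitrage node. -/
def ArbNode (𝒮 : Set (ℕ → ℝ)) (S : ℕ → ℝ) (j : ℕ) : Prop :=
  ∃ ε : ℝ, (ε = 1 ∨ ε = -1) ∧
    (∀ S' ∈ 𝒮, agreesUpTo S S' j → 0 ≤ ε * (S' (j + 1) - S j)) ∧
    ∃ S' ∈ 𝒮, agreesUpTo S S' j ∧ 0 < ε * (S' (j + 1) - S j)

/-- Arbitrage node of type I. -/
def TypeINode (𝒮 : Set (ℕ → ℝ)) (S : ℕ → ℝ) (j : ℕ) : Prop :=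
  ArbNode 𝒮 S j ∧ ∃ S' ∈ 𝒮, agreesUpTo S S' j ∧ S' (j + 1) = S j

/-- Arbitrage node of type II. -/
def TypeIINode (𝒮 : Set (ℕ → ℝ)) (S : ℕ → ℝ) (j : ℕ) : Prop :=
  ArbNode 𝒮 S j ∧ ¬ ∃ S' ∈ 𝒮, agreesUpTo S S' j ∧ S' (j + 1) = S j

/-- Up-down node: neither flat nor an arbitrage node. -/
def UpDownNode (𝒮 : Set (ℕ → ℝ)) (S : ℕ → ℝ) (j : ℕ) : Prop :=
  ¬ FlatNode 𝒮 S j ∧ ¬ ArbNode 𝒮 S j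

/-- The set `N` of trajectories moving at a type I arbitrage node. -/
def NSet (𝒮 : Set (ℕ → ℝ)) : Set (ℕ → ℝ) :=
  {S | S ∈ 𝒮 ∧ ∃ j : ℕ, TypeINode 𝒮 S j ∧ S (j + 1) ≠ S j}

/-- The set `N_n` of trajectories moving at a type I arbitrage node before time `n`. -/
def NSetUpTo (𝒮 : Set (ℕ → ℝ)) (n : ℕ) : Set (ℕ → ℝ) :=
  {S | S ∈ 𝒮 ∧ ∃ j < n, TypeINode 𝒮 S j ∧ S (j + 1) ≠ S j}

/-- Membership in `L¹_(L)`: `f` has finite norm and is a `‖·‖`-limit of elements of `E'`. -/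
def MemL1L (𝒮 : Set (ℕ → ℝ)) (f : (ℕ → ℝ) → ℝ) : Prop :=
  pnorm 𝒮 f < ⊤ ∧
  ∃ P : ℕ → SimplePortfolio, (∀ m, pnorm 𝒮 ((P m).wealth) < ⊤) ∧
    Tendsto (fun m => pnorm 𝒮 (fun S => f S - (P m).wealth S)) atTop (nhds 0)

/-- Membership in `L¹_(K)`: the outer and inner integrals agree and are finite. -/
def MemL1K (𝒮 : Set (ℕ → ℝ)) (f : (ℕ → ℝ) → ℝ) : Prop :=
  ∃ c : ℝ, sigmaBar 𝒮 (fun S => ((f S : ℝ) : EReal)) = (c : EReal) ∧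
    sigmaBar 𝒮 (fun S => ((-f S : ℝ) : EReal)) = ((-c : ℝ) : EReal)

/-- `f` has finite maturity: it depends only on an initial segment of the trajectory. -/
def FiniteMaturity (𝒮 : Set (ℕ → ℝ)) (f : (ℕ → ℝ) → ℝ) : Prop :=
  ∃ n : ℕ, ∀ S ∈ 𝒮, ∀ S' ∈ 𝒮, (∀ i, i ≤ n → S i = S' i) → f S = f S'

namespace Stmt9Aux

open SimplePortfolio

/-- A positive family of simple portfolios covering `f`. -/
def Covers (𝒮 : Set (ℕ → ℝ)) (Pf : ℕ → SimplePortfolio) (f : (ℕ → ℝ) → EReal) : Prop :=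
  (∀ m, (Pf m).Positive 𝒮) ∧
  ∀ S ∈ 𝒮, f S ≤ ((∑' m, ENNReal.ofReal ((Pf m).wealth S) : ℝ≥0∞) : EReal)

def cost (Pf : ℕ → SimplePortfolio) : ℝ≥0∞ := ∑' m, ENNReal.ofReal ((Pf m).V)

lemma IBar_le_cost {𝒮 : Set (ℕ → ℝ)} {Pf : ℕ → SimplePortfolio} {f : (ℕ → ℝ) → EReal}
    (h : Covers 𝒮 Pf f) : IBar 𝒮 f ≤ (cost Pf : EReal) :=
  sInf_le ⟨Pf, h.1, h.2, rfl⟩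

lemma IBar_nonneg (𝒮 : Set (ℕ → ℝ)) (f : (ℕ → ℝ) → EReal) : 0 ≤ IBar 𝒮 f :=
  le_sInf (by rintro c ⟨Q, -, -, rfl⟩; exact EReal.coe_ennreal_nonneg _)

lemma exists_cover_of_lt {𝒮 : Set (ℕ → ℝ)} {f : (ℕ → ℝ) → EReal} {c : ℝ≥0∞}
    (h : IBar 𝒮 f < (c : EReal)) :
    ∃ Pf, Covers 𝒮 Pf f ∧ cost Pf < c := by
  obtain ⟨b, ⟨Q, h1, h2, rfl⟩, hb⟩ := sInf_lt_iff.mp h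
  exact ⟨Q, ⟨h1, h2⟩, EReal.coe_ennreal_lt_coe_ennreal_iff.mp hb⟩

lemma tsum_top_of_ge {w : ℕ → ℝ≥0∞} {a : ℝ≥0∞} (ha : a ≠ 0) (h : ∀ j, a ≤ w j) :
    ∑' j, w j = ⊤ :=
  top_unique (calc (⊤ : ℝ≥0∞) = ∑' _ : ℕ, a := (ENNReal.tsum_const_eq_top_of_ne_zero ha).symm
    _ ≤ ∑' j, w j := ENNReal.tsum_le_tsum h)

lemma interleave (A B : ℕ → SimplePortfolio) :
    ∃ D : ℕ → SimplePortfolio,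
      (∀ F : SimplePortfolio → ℝ≥0∞, ∑' nn, F (D nn) = (∑' k, F (A k)) + ∑' k, F (B k)) ∧
      (∀ nn, D nn = A (nn / 2) ∨ D nn = B (nn / 2)) := by
  refine ⟨fun nn => if nn % 2 = 0 then A (nn / 2) else B (nn / 2), fun F => ?_, fun nn => by
    by_cases h : nn % 2 = 0 <;> simp [h]⟩
  rw [← tsum_even_add_odd (f := fun nn => F (if nn % 2 = 0 then A (nn / 2) else B (nn / 2)))
    ENNReal.summable ENNReal.summable]
  congr 1
  · refine tsum_congr fun k => ?_
    have h1 : (2 * k) % 2 = 0 := by omega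
    have h2 : (2 * k) / 2 = k := by omega
    simp [h1, h2]
  · refine tsum_congr fun k => ?_
    have h1 : (2 * k + 1) % 2 = 1 := by omega
    have h2 : (2 * k + 1) / 2 = k := by omega
    simp [h1, h2]

lemma concatSeq (C : ℕ → ℕ → SimplePortfolio) :
    ∃ R : ℕ → SimplePortfolio,
      (∀ F : SimplePortfolio → ℝ≥0∞, ∑' nn, F (R nn) = ∑' k, ∑' j, F (C k j)) ∧
      ∀ nn, ∃ k j, R nn = C k j := by
  let e : ℕ ≃ ℕ × ℕ := (Denumerable.eqv (ℕ × ℕ)).symm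
  refine ⟨fun nn => C (e nn).1 (e nn).2, fun F => ?_, fun nn => ⟨_, _, rfl⟩⟩
  rw [← ENNReal.tsum_prod]
  exact e.tsum_eq fun p : ℕ × ℕ => F (C p.1 p.2)

lemma EReal_neg_le_of_nonneg_add {a : ℝ} {x : EReal} (h : 0 ≤ (a : EReal) + x) :
    ((-a : ℝ) : EReal) ≤ x := by
  induction x using EReal.rec with
  | bot => simp at h
  | coe b =>
    rw [← EReal.coe_add] at h
    have h' : (0 : ℝ) ≤ a + b := by exact_mod_cast h
    exact_mod_cast (by linarith : (-a : ℝ) ≤ b)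
  | top => exact le_top

lemma EReal_le_coe_of_coe_add_le {a b : ℝ} {x : EReal} (h : (a : EReal) + x ≤ (b : EReal)) :
    x ≤ ((b - a : ℝ) : EReal) := by
  induction x using EReal.rec with
  | bot => exact bot_le
  | coe c =>
    rw [← EReal.coe_add] at h
    have h' : a + c ≤ b := by exact_mod_cast h
    exact_mod_cast (by linarith : c ≤ b - a)
  | top =>
    rw [EReal.coe_add_top] at h
    exact ((EReal.coe_lt_top b).not_ge h).elim

def negSP (A : SimplePortfolio) : SimplePortfolio where
  V := -A.V
  n := A.n
  H := fun i S => -(A.H i S)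
  nonanticipating := fun i S S' h => by
    show -(A.H i S) = -(A.H i S')
    rw [A.nonanticipating i S S' h]

lemma negSP_wealth (A : SimplePortfolio) (S : ℕ → ℝ) :
    (negSP A).wealth S = -(A.wealth S) := by
  simp only [SimplePortfolio.wealth, negSP, neg_mul, Finset.sum_neg_distrib, neg_add]

def sumSP (P : ℕ → SimplePortfolio) (n : ℕ) : SimplePortfolio where
  V := ∑ m ∈ Finset.range n, (P m).V
  n := (Finset.range n).sup fun m => (P m).n
  H := fun i S => ∑ m ∈ Finset.range n, if i < (P m).n then (P m).H i S else 0
  nonanticipating := by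
    intro i S S' h
    refine Finset.sum_congr rfl fun m _ => ?_
    by_cases hc : i < (P m).n
    · simp only [if_pos hc, (P m).nonanticipating i S S' h]
    · simp [hc]

lemma ite_sum_range {N k : ℕ} (h : k ≤ N) (f : ℕ → ℝ) :
    ∑ i ∈ Finset.range N, (if i < k then f i else 0) = ∑ i ∈ Finset.range k, f i := by
  rw [← Finset.sum_subset (Finset.range_subset_range.mpr h)
    (fun x _ hx => if_neg (by simpa [Finset.mem_range] using hx))]
  exact Finset.sum_congr rfl fun i hi => if_pos (Finset.mem_range.mp hi)

lemma sumSP_wealth (P : ℕ → SimplePortfolio) (n : ℕ) (S : ℕ → ℝ) :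
    (sumSP P n).wealth S = ∑ m ∈ Finset.range n, (P m).wealth S := by
  have hN : ∀ m ∈ Finset.range n, (P m).n ≤ (Finset.range n).sup fun m => (P m).n :=
    fun m hm => Finset.le_sup (f := fun m => (P m).n) hm
  simp only [SimplePortfolio.wealth, sumSP, Finset.sum_mul, Finset.sum_add_distrib]
  congr 1
  rw [Finset.sum_comm]
  refine Finset.sum_congr rfl fun m hm => ?_
  rw [← ite_sum_range (hN m hm) (fun i => (P m).H i S * (S (i + 1) - S i))]
  exact Finset.sum_congr rfl fun i _ => by by_cases hc : i < (P m).n <;> simp [hc]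

lemma nulltop {𝒮 : Set (ℕ → ℝ)} {A : Set (ℕ → ℝ)} (hA : A ⊆ 𝒮)
    (h : IBar 𝒮 (A.indicator fun _ => (1 : EReal)) = 0) {c : ℝ≥0∞} (hc : c ≠ 0) :
    ∃ N : ℕ → SimplePortfolio, (∀ m, (N m).Positive 𝒮) ∧
      (∀ S ∈ A, (∑' m, ENNReal.ofReal ((N m).wealth S)) = ⊤) ∧ cost N < c := by
  obtain ⟨δ, δpos, hδ⟩ := ENNReal.exists_pos_sum_of_countable' hc ℕ
  have hex : ∀ j : ℕ, ∃ Pf, Covers 𝒮 Pf (A.indicator fun _ => (1 : EReal)) ∧ cost Pf < δ j :=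
    fun j => exists_cover_of_lt (by rw [h]; exact EReal.coe_ennreal_pos.mpr (δpos j))
  choose C hC hcost using hex
  obtain ⟨R, hR, hmem⟩ := concatSeq C
  refine ⟨R, fun nn => ?_, fun S hS => ?_, ?_⟩
  · obtain ⟨k, j, hkj⟩ := hmem nn
    rw [hkj]; exact (hC k).1 j
  · rw [hR (fun Q => ENNReal.ofReal (Q.wealth S))]
    refine tsum_top_of_ge one_ne_zero fun k => ?_
    have h1 := (hC k).2 S (hA hS)
    rw [Set.indicator_of_mem hS] at h1
    rw [← EReal.coe_ennreal_le_coe_ennreal_iff, EReal.coe_ennreal_one]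
    exact h1
  · calc cost R = ∑' k, cost (C k) := hR (fun Q => ENNReal.ofReal Q.V)
      _ ≤ ∑' k, δ k := ENNReal.tsum_le_tsum fun k => (hcost k).le
      _ < c := hδ

lemma main_estimate (𝒮 : Set (ℕ → ℝ)) (hK : KoenigCond 𝒮)
    (P : ℕ → SimplePortfolio) (hP : IsGenPortfolio 𝒮 P)
    (hzero : totalEndow P = 0)
    (hneg : NullSet 𝒮 {S | S ∈ 𝒮 ∧ totalWealth P S < 0})
    (d : ℝ) (hd : 0 < d) :
    ∃ G : ℕ → SimplePortfolio, Covers 𝒮 G (fun S => max (totalWealth P S) 0) ∧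
      cost G ≤ ENNReal.ofReal d := by
  classical
  -- positivity of the portfolios P (m+1)
  have hwpos : ∀ m, ∀ S ∈ 𝒮, 0 ≤ (P (m + 1)).wealth S :=
    fun m S hS => (hP (m + 1) (Nat.le_add_left 1 m)).2 S hS
  have hvpos : ∀ m, 0 ≤ (P (m + 1)).V := fun m => (hP (m + 1) (Nat.le_add_left 1 m)).1
  -- the total endowment series
  have hstop : (∑' m, ENNReal.ofReal ((P (m + 1)).V)) ≠ ⊤ := by
    intro htop
    have : totalEndow P = ⊤ := by
      rw [totalEndow, htop, EReal.coe_ennreal_top, EReal.coe_add_top]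
    rw [hzero] at this
    exact absurd this (by simp)
  have hsum : Summable fun m => (P (m + 1)).V := by
    refine (summable_congr fun m => ?_).mp (ENNReal.summable_toReal hstop)
    rw [ENNReal.toReal_ofReal (hvpos m)]
  have hV0 : (P 0).V = -∑' m, (P (m + 1)).V := by
    have h1 : (∑' m, ENNReal.ofReal ((P (m + 1)).V)) = ENNReal.ofReal (∑' m, (P (m + 1)).V) :=
      (ENNReal.ofReal_tsum_of_nonneg hvpos hsum).symm
    have h2 : totalEndow P = (((P 0).V + ∑' m, (P (m + 1)).V : ℝ) : EReal) := by
      rw [totalEndow, h1, EReal.coe_ennreal_ofReal, max_eq_left (tsum_nonneg hvpos),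
        ← EReal.coe_add]
    rw [hzero] at h2
    have h3 : (P 0).V + ∑' m, (P (m + 1)).V = 0 := by exact_mod_cast h2.symm
    linarith
  -- choose M with small tail
  obtain ⟨M, hM⟩ : ∃ M : ℕ, (∑' m, (P (m + M + 1)).V) < d / 2 := by
    have hps := hsum.hasSum.tendsto_sum_nat
    obtain ⟨M, hM⟩ := (Metric.tendsto_atTop.mp hps) (d / 2) (by linarith)
    refine ⟨M, ?_⟩
    have hsplit := Summable.sum_add_tsum_nat_add M hsum
    have htail : (∑' m, (P (m + M + 1)).V) =
        (∑' m, (P (m + 1)).V) - ∑ i ∈ Finset.range M, (P (i + 1)).V := by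
      rw [← hsplit]; ring
    have hdist := hM M le_rfl
    rw [Real.dist_eq] at hdist
    have := abs_lt.mp hdist
    rw [htail]
    linarith [this.1, this.2]
  set tR : ℝ := ∑' m, (P (m + M + 1)).V with htR
  have htRnn : 0 ≤ tR := tsum_nonneg fun m => hvpos (m + M)
  set δ : ℝ := d / 4 with hδdef
  have hδpos : (0 : ℝ) < δ := by rw [hδdef]; linarith
  -- the summed portfolio Q and its endowment
  set Q : SimplePortfolio := sumSP P (M + 1) with hQ
  have hQV : Q.V = -tR := by
    have h1 : Q.V = ∑ m ∈ Finset.range (M + 1), (P m).V := rfl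
    rw [h1, Finset.sum_range_succ']
    have h2 : ∑ i ∈ Finset.range M, (P (i + 1)).V + ∑' m, (P (m + M + 1)).V
        = ∑' m, (P (m + 1)).V := Summable.sum_add_tsum_nat_add M hsum
    rw [hV0, htR]
    linarith
  -- the tail portfolio family
  set T : ℕ → SimplePortfolio := fun m => P (m + M + 1) with hT
  have hTpos : ∀ m, (T m).Positive 𝒮 := fun m => hP (m + M + 1) (by omega)
  have hTcost : cost T = ENNReal.ofReal tR := by
    rw [cost, htR, ENNReal.ofReal_tsum_of_nonneg (fun m => hvpos (m + M))
      ((summable_nat_add_iff M).mpr hsum)]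
  -- the wealth split
  have hsplitW : ∀ S ∈ 𝒮, totalWealth P S = ((Q.wealth S : ℝ) : EReal) +
      ((∑' m, ENNReal.ofReal ((P (m + M + 1)).wealth S) : ℝ≥0∞) : EReal) := by
    intro S hS
    have h1 : (∑' m, ENNReal.ofReal ((P (m + 1)).wealth S)) =
        (∑ m ∈ Finset.range M, ENNReal.ofReal ((P (m + 1)).wealth S)) +
          ∑' m, ENNReal.ofReal ((P (m + M + 1)).wealth S) :=
      (Summable.sum_add_tsum_nat_add' (k := M) ENNReal.summable).symm
    have h2 : (∑ m ∈ Finset.range M, ENNReal.ofReal ((P (m + 1)).wealth S)) =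
        ENNReal.ofReal (∑ m ∈ Finset.range M, (P (m + 1)).wealth S) :=
      (ENNReal.ofReal_sum_of_nonneg fun m _ => hwpos m S hS).symm
    have h3 : Q.wealth S = (P 0).wealth S + ∑ m ∈ Finset.range M, (P (m + 1)).wealth S := by
      rw [hQ, sumSP_wealth, Finset.sum_range_succ']; ring
    rw [totalWealth, h1, h2, EReal.coe_ennreal_add, EReal.coe_ennreal_ofReal,
      max_eq_left (Finset.sum_nonneg fun m _ => hwpos m S hS), ← add_assoc, ← EReal.coe_add,
      h3]
  -- the null cover of the negative set
  obtain ⟨N, hNpos, hNtop, hNcost⟩ := nulltop (A := {S | S ∈ 𝒮 ∧ totalWealth P S < 0})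
    (fun S hS => hS.1) hneg (c := ENNReal.ofReal δ) (ENNReal.ofReal_pos.mpr hδpos).ne'
  -- cover of the negative part of Q's wealth
  obtain ⟨D, hD, hDmem⟩ := interleave T N
  have hDcovers : Covers 𝒮 D (fun S => ((max (-(Q.wealth S)) 0 : ℝ) : EReal)) := by
    constructor
    · intro nn
      rcases hDmem nn with h | h <;> rw [h]
      · exact hTpos _
      · exact hNpos _
    · intro S hS
      rw [hD (fun R => ENNReal.ofReal (R.wealth S))]
      by_cases hSneg : S ∈ {S | S ∈ 𝒮 ∧ totalWealth P S < 0}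
      · rw [hNtop S hSneg, add_top _, EReal.coe_ennreal_top]
        exact le_top
      · have hnn : 0 ≤ totalWealth P S := by
          by_contra hlt
          exact hSneg ⟨hS, not_le.mp hlt⟩
        rw [hsplitW S hS] at hnn
        have key : ((max (-(Q.wealth S)) 0 : ℝ) : EReal) ≤
            ((∑' m, ENNReal.ofReal ((P (m + M + 1)).wealth S) : ℝ≥0∞) : EReal) := by
          rcases le_or_gt 0 (Q.wealth S) with hq | hq
          · rw [max_eq_right (neg_nonpos.mpr hq)]
            exact EReal.coe_ennreal_nonneg _
          · rw [max_eq_left (by linarith : (0:ℝ) ≤ -(Q.wealth S))]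
            exact EReal_neg_le_of_nonneg_add hnn
        refine key.trans ?_
        rw [EReal.coe_ennreal_le_coe_ennreal_iff]
        exact le_self_add
  -- König's condition applied to -Q
  have hk := hK (negSP Q)
  have e1 : (fun S => ((max (-(negSP Q).wealth S) 0 : ℝ) : EReal)) =
      (fun S => ((max (Q.wealth S) 0 : ℝ) : EReal)) := by
    funext S; rw [negSP_wealth, neg_neg]
  have e2 : (fun S => ((max ((negSP Q).wealth S) 0 : ℝ) : EReal)) =
      (fun S => ((max (-(Q.wealth S)) 0 : ℝ) : EReal)) := by
    funext S; rw [negSP_wealth]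
  rw [e1, e2] at hk
  have hVneg : ((negSP Q).V : EReal) = ((tR : ℝ) : EReal) := by
    have : (negSP Q).V = tR := by
      show -Q.V = tR
      rw [hQV]; ring
    rw [this]
  rw [hVneg] at hk
  -- bound on IBar of the negative part
  have hIneg : IBar 𝒮 (fun S => ((max (-(Q.wealth S)) 0 : ℝ) : EReal)) ≤
      ((tR + δ : ℝ) : EReal) := by
    refine (IBar_le_cost hDcovers).trans ?_
    have hcost : cost D = cost T + cost N := hD (fun R => ENNReal.ofReal R.V)
    rw [hcost, hTcost]
    calc ((ENNReal.ofReal tR + cost N : ℝ≥0∞) : EReal)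
        ≤ ((ENNReal.ofReal tR + ENNReal.ofReal δ : ℝ≥0∞) : EReal) := by
          rw [EReal.coe_ennreal_le_coe_ennreal_iff]
          exact add_le_add le_rfl hNcost.le
      _ = ((tR + δ : ℝ) : EReal) := by
          rw [← ENNReal.ofReal_add htRnn hδpos.le, EReal.coe_ennreal_ofReal,
            max_eq_left (by linarith)]
  -- deduce the bound on the positive part
  have hIpos : IBar 𝒮 (fun S => ((max (Q.wealth S) 0 : ℝ) : EReal)) ≤ ((δ : ℝ) : EReal) := by
    have h1 := hk.trans hIneg
    have h2 := EReal_le_coe_of_coe_add_le h1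
    have h3 : tR + δ - tR = δ := by ring
    rwa [h3] at h2
  -- extract a cover of the positive part
  obtain ⟨Cw, hCw, hCwcost⟩ := exists_cover_of_lt (c := ENNReal.ofReal (2 * δ))
    (lt_of_le_of_lt hIpos (by
      rw [EReal.coe_ennreal_ofReal, max_eq_left (by linarith : (0:ℝ) ≤ 2 * δ)]
      exact_mod_cast (by linarith : δ < 2 * δ)))
  -- assemble the final cover
  obtain ⟨G, hG, hGmem⟩ := interleave Cw T
  refine ⟨G, ⟨fun nn => ?_, fun S hS => ?_⟩, ?_⟩
  · rcases hGmem nn with h | h <;> rw [h]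
    · exact hCw.1 _
    · exact hTpos _
  · rw [hG (fun R => ENNReal.ofReal (R.wealth S))]
    beta_reduce
    rcases le_or_gt (totalWealth P S) 0 with hle | hlt
    · rw [max_eq_right hle]
      exact EReal.coe_ennreal_nonneg _
    · rw [max_eq_left hlt.le, hsplitW S hS, EReal.coe_ennreal_add]
      refine add_le_add ?_ le_rfl
      refine le_trans ?_ (hCw.2 S hS)
      show ((Q.wealth S : ℝ) : EReal) ≤ ((max (Q.wealth S) 0 : ℝ) : EReal)
      exact_mod_cast le_max_left (Q.wealth S) 0
  · have hcost : cost G = cost Cw + cost T := hG (fun R => ENNReal.ofReal R.V)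
    rw [hcost, hTcost]
    have h1 : cost Cw ≤ ENNReal.ofReal (d / 2) := by
      refine hCwcost.le.trans ?_
      rw [hδdef]
      exact ENNReal.ofReal_le_ofReal (by linarith)
    have h2 : ENNReal.ofReal tR ≤ ENNReal.ofReal (d / 2) :=
      ENNReal.ofReal_le_ofReal hM.le
    calc cost Cw + ENNReal.ofReal tR ≤ ENNReal.ofReal (d / 2) + ENNReal.ofReal (d / 2) :=
          add_le_add h1 h2
      _ = ENNReal.ofReal d := by
          rw [← ENNReal.ofReal_add (by linarith) (by linarith)]
          norm_num

end Stmt9Aux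
/-- under (LOP) and (K), there is no arbitrage with respect to the
`‖·‖`-null sets in the class of generalized portfolios. -/
theorem stmt9 (𝒮 : Set (ℕ → ℝ)) (hlop : LOP 𝒮) (hK : KoenigCond 𝒮)
    (P : ℕ → SimplePortfolio) (hP : IsGenPortfolio 𝒮 P)
    (hzero : totalEndow P = 0)
    (hneg : NullSet 𝒮 {S | S ∈ 𝒮 ∧ totalWealth P S < 0}) :
    NullSet 𝒮 {S | S ∈ 𝒮 ∧ 0 < totalWealth P S} := by
  classical
  have happly : ∀ d : ℝ, 0 < d →
      IBar 𝒮 (Set.indicator {S | S ∈ 𝒮 ∧ 0 < totalWealth P S} fun _ => (1 : EReal)) ≤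
        ((d : ℝ) : EReal) := by
    intro d hd
    obtain ⟨ε', hε'pos, hε'sum⟩ := ENNReal.exists_pos_sum_of_countable
      (ENNReal.ofReal_pos.mpr hd).ne' ℕ
    have hex : ∀ k : ℕ, ∃ G, Stmt9Aux.Covers 𝒮 G (fun S => max (totalWealth P S) 0) ∧
        Stmt9Aux.cost G ≤ ENNReal.ofReal ((ε' k : ℝ)) :=
      fun k => Stmt9Aux.main_estimate 𝒮 hK P hP hzero hneg ((ε' k : ℝ))
        (by exact_mod_cast hε'pos k)
    choose G hGcov hGcost using hex
    obtain ⟨R, hR, hmem⟩ := Stmt9Aux.concatSeq G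
    have hcov : Stmt9Aux.Covers 𝒮 R
        (Set.indicator {S | S ∈ 𝒮 ∧ 0 < totalWealth P S} fun _ => (1 : EReal)) := by
      constructor
      · intro nn; obtain ⟨k, j, hkj⟩ := hmem nn; rw [hkj]; exact (hGcov k).1 j
      · intro S hS
        rw [hR (fun Q => ENNReal.ofReal (Q.wealth S))]
        by_cases hSpos : S ∈ {S | S ∈ 𝒮 ∧ 0 < totalWealth P S}
        · rw [Set.indicator_of_mem hSpos]
          have hpos : (0 : EReal) < max (totalWealth P S) 0 := lt_max_iff.mpr (Or.inl hSpos.2)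
          obtain ⟨x, hx0, hxlt⟩ := EReal.lt_iff_exists_real_btwn.mp hpos
          have hx0' : (0 : ℝ) < x := by exact_mod_cast hx0
          have hbound : ∀ k, ENNReal.ofReal x ≤ ∑' j, ENNReal.ofReal ((G k j).wealth S) := by
            intro k
            have h1 : ((x : ℝ) : EReal) ≤
                ((∑' j, ENNReal.ofReal ((G k j).wealth S) : ℝ≥0∞) : EReal) :=
              le_trans hxlt.le ((hGcov k).2 S hS)
            rw [← EReal.coe_ennreal_le_coe_ennreal_iff] at *
            rwa [EReal.coe_ennreal_ofReal, max_eq_left hx0'.le]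
          have htop : (∑' k, ∑' j, ENNReal.ofReal ((G k j).wealth S)) = ⊤ :=
            Stmt9Aux.tsum_top_of_ge (ENNReal.ofReal_pos.mpr hx0').ne' hbound
          rw [htop, EReal.coe_ennreal_top]
          exact le_top
        · rw [Set.indicator_of_notMem hSpos]
          exact EReal.coe_ennreal_nonneg _
    refine (Stmt9Aux.IBar_le_cost hcov).trans ?_
    have hcost : Stmt9Aux.cost R ≤ ENNReal.ofReal d := by
      calc Stmt9Aux.cost R = ∑' k, Stmt9Aux.cost (G k) := hR (fun Q => ENNReal.ofReal Q.V)
        _ ≤ ∑' k, ((ε' k : ℝ≥0∞)) := ENNReal.tsum_le_tsum (fun k => by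
            rw [← ENNReal.ofReal_coe_nnreal]; exact hGcost k)
        _ ≤ ENNReal.ofReal d := hε'sum.le
    calc (Stmt9Aux.cost R : EReal) ≤ ((ENNReal.ofReal d : ℝ≥0∞) : EReal) :=
          EReal.coe_ennreal_le_coe_ennreal_iff.mpr hcost
      _ = ((d : ℝ) : EReal) := by rw [EReal.coe_ennreal_ofReal, max_eq_left hd.le]
  unfold NullSet
  refine le_antisymm ?_ (Stmt9Aux.IBar_nonneg _ _)
  by_contra hI
  have h0I : (0 : EReal) <
      IBar 𝒮 (Set.indicator {S | S ∈ 𝒮 ∧ 0 < totalWealth P S} fun _ => (1 : EReal)) :=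
    not_le.mp hI
  obtain ⟨x, hx0, hxI⟩ := EReal.lt_iff_exists_real_btwn.mp h0I
  have hx0' : (0 : ℝ) < x := by exact_mod_cast hx0
  exact hxI.not_ge (happly x hx0')
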